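/- Let G be a connected graph, r a vertex, and suppose every isometric path P of G satisfies |A_r(P)| ≤ c, i.e., every antichain w.r.t. r among the vertices of an isometric path has size at most c. Then a minimum directed path cover of the BFS DAG G_r, together with extending each directed path to an r-rooted isometric path, yields an isometric path cover of G of size at most c times the isometric path number of G. Hence Isometric Path Cover admits a c-approximation when ipacc(G) ≤ c. -/

import Mathlib

open SimpleGraph

variable {V : Type*}

/-- One step of the BFS DAG `G_r`: the edge `ab` is oriented from `a` to `b`
(toward the root `r`), i.e. `d(r,b) = d(r,a) - 1`. -/
def dagStep (G : SimpleGraph V) (r a b : V) : Prop :=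
  G.Adj a b ∧ G.dist r a = G.dist r b + 1

/-- Reachability by a directed path in the BFS DAG `G_r`. -/
def dagReach (G : SimpleGraph V) (r a b : V) : Prop :=
  Relation.ReflTransGen (dagStep G r) a b

/-- A finite set of vertices is an antichain with respect to the root `r`:
its vertices are pairwise unreachable in the BFS DAG `G_r`. -/
def IsAntichainSet (G : SimpleGraph V) (r : V) (A : Finset V) : Prop :=
  ∀ a ∈ A, ∀ b ∈ A, a ≠ b → ¬ dagReach G r a b ∧ ¬ dagReach G r b a

/-- A walk is an isometric path: a shortest path between its endpoints. -/
def IsIsometricPath (G : SimpleGraph V) {u v : V} (p : G.Walk u v) : Prop :=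
  p.IsPath ∧ p.length = G.dist u v

/-- The vertices of `p` can be covered by at most `k` many `r`-rooted isometric paths. -/
def CoveredBy (G : SimpleGraph V) (r : V) {x y : V} (p : G.Walk x y) (k : ℕ) : Prop :=
  ∃ s : Finset (Σ v : V, G.Walk r v), s.card ≤ k ∧
    (∀ q ∈ s, IsIsometricPath G q.2) ∧
    ∀ a ∈ p.support, ∃ q ∈ s, a ∈ q.2.support
section Aux

variable (G : SimpleGraph V) (r : V)

lemma aux_dist_adj (hG : G.Connected) {a b : V} (hab : G.Adj a b) : G.dist a b ≤ 1 := by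
  simpa using SimpleGraph.dist_le hab.toWalk

lemma aux_lip_left (hG : G.Connected) {x y : V} (p : G.Walk x y) (i : ℕ) :
    G.dist x (p.getVert i) ≤ i := by
  induction p generalizing i with
  | nil => simp [SimpleGraph.Walk.getVert, SimpleGraph.dist_self]
  | @cons a b cc hadj q ih =>
    cases i with
    | zero => simp [SimpleGraph.Walk.getVert, SimpleGraph.dist_self]
    | succ n =>
      calc G.dist a ((q.cons hadj).getVert (n+1)) ≤ G.dist a b + G.dist b (q.getVert n) := by
            rw [SimpleGraph.Walk.getVert_cons_succ]; exact hG.dist_triangle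
        _ ≤ 1 + n := add_le_add (aux_dist_adj G hG hadj) (ih n)
        _ = n + 1 := by omega

lemma aux_lip_right (hG : G.Connected) {x y : V} (p : G.Walk x y) (i : ℕ) :
    G.dist (p.getVert i) y ≤ p.length - i := by
  induction p generalizing i with
  | nil => simp [SimpleGraph.Walk.getVert, SimpleGraph.dist_self]
  | @cons a b cc hadj q ih =>
    cases i with
    | zero =>
      simp only [SimpleGraph.Walk.getVert_zero, SimpleGraph.Walk.length_cons, Nat.sub_zero]
      calc G.dist a cc ≤ G.dist a b + G.dist b cc := hG.dist_triangle
        _ ≤ 1 + q.length := add_le_add (aux_dist_adj G hG hadj) (by simpa using SimpleGraph.dist_le q)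
        _ = q.length + 1 := by omega
    | succ n =>
      rw [SimpleGraph.Walk.getVert_cons_succ, SimpleGraph.Walk.length_cons]
      calc G.dist (q.getVert n) cc ≤ q.length - n := ih n
        _ ≤ q.length + 1 - (n+1) := by omega

lemma aux_reach_dist (hG : G.Connected) {a b : V} (hr : dagReach G r a b) :
    G.dist r b + G.dist a b ≤ G.dist r a := by
  have key : ∃ q : G.Walk a b, G.dist r a = G.dist r b + q.length := by
    induction hr using Relation.ReflTransGen.head_induction_on with
    | refl => exact ⟨SimpleGraph.Walk.nil, by simp⟩
    | head hstep _ ih =>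
      obtain ⟨q, hq⟩ := ih
      exact ⟨SimpleGraph.Walk.cons hstep.1 q, by
        have h2 := hstep.2
        rw [SimpleGraph.Walk.length_cons]; omega⟩
  obtain ⟨q, hq⟩ := key
  have := SimpleGraph.dist_le q
  omega

lemma aux_run_walk {x y : V} (p : G.Walk x y) (t : ℕ) :
    ∀ k, t + k ≤ p.length →
    ∃ q : G.Walk (p.getVert t) (p.getVert (t+k)), q.length = k ∧
      ∀ i, t ≤ i → i ≤ t + k → p.getVert i ∈ q.support := by
  intro k
  induction k with
  | zero =>
    intro _
    exact ⟨SimpleGraph.Walk.nil.copy rfl (by rw [Nat.add_zero]), by simp, by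
      intro i h1 h2
      have : i = t := by omega
      subst this
      simp⟩
  | succ n ih =>
    intro hk
    obtain ⟨q, hql, hqs⟩ := ih (by omega)
    have hadj : G.Adj (p.getVert (t+n)) (p.getVert (t+n+1)) :=
      p.adj_getVert_succ (by omega)
    refine ⟨(q.concat hadj).copy rfl (by rw [Nat.add_assoc]), ?_, ?_⟩
    · simp [SimpleGraph.Walk.length_concat, hql]
    · intro i h1 h2
      rw [SimpleGraph.Walk.support_copy, SimpleGraph.Walk.support_concat,
        List.mem_append]
      rcases Nat.lt_or_ge i (t+n+1) with hlt | hge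
      · exact Or.inl (hqs i h1 (by omega))
      · have : i = t + n + 1 := by omega
        subst this
        simp


lemma aux_chain (hG : G.Connected) {b w : V} (q : G.Walk b w)
    (hq : G.dist r w = G.dist r b + q.length) :
    ∃ Q : G.Walk r w, IsIsometricPath G Q ∧ ∀ a ∈ q.support, a ∈ Q.support := by
  obtain ⟨q0, hq0⟩ := hG.exists_walk_length_eq_dist r b
  refine ⟨q0.append q, ⟨?_, ?_⟩, ?_⟩
  · apply SimpleGraph.Walk.isPath_of_length_eq_dist
    rw [SimpleGraph.Walk.length_append, hq0, hq]
  · rw [SimpleGraph.Walk.length_append, hq0, hq]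
  · intro a ha
    rw [SimpleGraph.Walk.mem_support_append_iff]
    exact Or.inr ha

def Mono (G : SimpleGraph V) (r : V) {x y : V} (p : G.Walk x y) (t k : ℕ) : Prop :=
  (∀ i, t ≤ i → i < t + k → G.dist r (p.getVert (i+1)) = G.dist r (p.getVert i) + 1) ∨
  (∀ i, t ≤ i → i < t + k → G.dist r (p.getVert i) = G.dist r (p.getVert (i+1)) + 1)

lemma aux_mono_restrict {x y : V} {p : G.Walk x y} {t k k' : ℕ} (h : Mono G r p t k)
    (hk : k' ≤ k) : Mono G r p t k' := by
  rcases h with h | h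
  · exact Or.inl fun i h1 h2 => h i h1 (by omega)
  · exact Or.inr fun i h1 h2 => h i h1 (by omega)

lemma aux_asc {x y : V} {p : G.Walk x y} {t : ℕ}
    (hm : ∀ i, t ≤ i → i < t + k → G.dist r (p.getVert (i+1)) = G.dist r (p.getVert i) + 1) :
    G.dist r (p.getVert (t+k)) = G.dist r (p.getVert t) + k := by
  induction k with
  | zero => simp
  | succ n ih =>
    have h1 := ih (fun i h1 h2 => hm i h1 (by omega))
    have h2 := hm (t+n) (by omega) (by omega)
    simp only [← Nat.add_assoc]
    omega

lemma aux_desc {x y : V} {p : G.Walk x y} {t : ℕ}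
    (hm : ∀ i, t ≤ i → i < t + k → G.dist r (p.getVert i) = G.dist r (p.getVert (i+1)) + 1) :
    G.dist r (p.getVert t) = G.dist r (p.getVert (t+k)) + k := by
  induction k with
  | zero => simp
  | succ n ih =>
    have h1 := ih (fun i h1 h2 => hm i h1 (by omega))
    have h2 := hm (t+n) (by omega) (by omega)
    simp only [← Nat.add_assoc]
    omega

lemma aux_mono_dist {x y : V} {p : G.Walk x y} {t k : ℕ} (hm : Mono G r p t k) :
    G.dist r (p.getVert (t+k)) = G.dist r (p.getVert t) + k ∨
    G.dist r (p.getVert t) = G.dist r (p.getVert (t+k)) + k := by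
  rcases hm with hm | hm
  · exact Or.inl (aux_asc G r hm)
  · exact Or.inr (aux_desc G r hm)

lemma aux_run_cover (hG : G.Connected) {x y : V} (p : G.Walk x y) {t k : ℕ}
    (hk : t + k ≤ p.length) (hm : Mono G r p t k) :
    ∃ Q : (Σ v : V, G.Walk r v), IsIsometricPath G Q.2 ∧
      ∀ i, t ≤ i → i ≤ t + k → p.getVert i ∈ Q.2.support := by
  obtain ⟨q, hql, hqs⟩ := aux_run_walk G p t k hk
  rcases aux_mono_dist G r hm with hd | hd
  · obtain ⟨Q, hQ1, hQ2⟩ := aux_chain G r hG q (by rw [hql]; exact hd)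
    exact ⟨⟨_, Q⟩, hQ1, fun i h1 h2 => hQ2 _ (hqs i h1 h2)⟩
  · obtain ⟨Q, hQ1, hQ2⟩ := aux_chain G r hG q.reverse
      (by rw [SimpleGraph.Walk.length_reverse, hql]; exact hd)
    refine ⟨⟨_, Q⟩, hQ1, fun i h1 h2 => hQ2 _ ?_⟩
    rw [SimpleGraph.Walk.support_reverse, List.mem_reverse]
    exact hqs i h1 h2


lemma aux_iso_dist (hG : G.Connected) {x y : V} {p : G.Walk x y}
    (hiso : p.length = G.dist x y) {t k : ℕ} (hk : t + k ≤ p.length) :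
    G.dist (p.getVert t) (p.getVert (t+k)) = k := by
  obtain ⟨q, hql, -⟩ := aux_run_walk G p t k hk
  have hub : G.dist (p.getVert t) (p.getVert (t+k)) ≤ k := by
    have := SimpleGraph.dist_le q
    rw [hql] at this
    exact this
  have h1 : G.dist x (p.getVert t) ≤ t := aux_lip_left G hG p t
  have h2 : G.dist (p.getVert (t+k)) y ≤ p.length - (t+k) := aux_lip_right G hG p (t+k)
  have h3 : G.dist x y ≤ G.dist x (p.getVert t) + G.dist (p.getVert t) y := hG.dist_triangle
  have h4 : G.dist (p.getVert t) y ≤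
      G.dist (p.getVert t) (p.getVert (t+k)) + G.dist (p.getVert (t+k)) y := hG.dist_triangle
  omega

lemma aux_tele (hG : G.Connected) {x y : V} (p : G.Walk x y) (a : ℕ) :
    ∀ k, a + k ≤ p.length → G.dist r (p.getVert (a+k)) ≤ G.dist r (p.getVert a) + k ∧
      G.dist r (p.getVert a) ≤ G.dist r (p.getVert (a+k)) + k := by
  intro k
  induction k with
  | zero => simp
  | succ n ih =>
    intro hk
    obtain ⟨i1, i2⟩ := ih (by omega)
    have hadj : G.Adj (p.getVert (a+n)) (p.getVert (a+n+1)) := p.adj_getVert_succ (by omega)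
    have hd : G.dist (p.getVert (a+n)) (p.getVert (a+n+1)) ≤ 1 := aux_dist_adj G hG hadj
    have hd2 : G.dist (p.getVert (a+n+1)) (p.getVert (a+n)) ≤ 1 := aux_dist_adj G hG hadj.symm
    have t1 : G.dist r (p.getVert (a+n+1)) ≤
        G.dist r (p.getVert (a+n)) + G.dist (p.getVert (a+n)) (p.getVert (a+n+1)) :=
      hG.dist_triangle
    have t2 : G.dist r (p.getVert (a+n)) ≤
        G.dist r (p.getVert (a+n+1)) + G.dist (p.getVert (a+n+1)) (p.getVert (a+n)) :=
      hG.dist_triangle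
    simp only [← Nat.add_assoc]
    omega

lemma aux_mono_reach (hG : G.Connected) {x y : V} {p : G.Walk x y}
    (hiso : p.length = G.dist x y) {t k : ℕ} (hk : t + k ≤ p.length)
    (hr : dagReach G r (p.getVert t) (p.getVert (t+k)) ∨
      dagReach G r (p.getVert (t+k)) (p.getVert t)) : Mono G r p t k := by
  have hD : G.dist (p.getVert t) (p.getVert (t+k)) = k := aux_iso_dist G hG hiso hk
  have hD' : G.dist (p.getVert (t+k)) (p.getVert t) = k := by
    rw [SimpleGraph.dist_comm]; exact hD
  rcases hr with hr | hr
  · -- key : f t ≥ f (t+k) + k : descending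
    have key := aux_reach_dist G r hG hr
    rw [hD] at key
    refine Or.inr fun i h1 h2 => ?_
    have e1 : t + (i - t) = i := by omega
    have a1 := (aux_tele G r hG p t (i-t) (by omega)).2
    rw [e1] at a1
    have b1 := (aux_tele G r hG p i 1 (by omega)).2
    have e2 : (i+1) + (t+k-(i+1)) = t+k := by omega
    have c1 := (aux_tele G r hG p (i+1) (t+k-(i+1)) (by omega)).2
    rw [e2] at c1
    omega
  · have key := aux_reach_dist G r hG hr
    rw [hD'] at key
    refine Or.inl fun i h1 h2 => ?_
    have e1 : t + (i - t) = i := by omega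
    have a1 := (aux_tele G r hG p t (i-t) (by omega)).1
    rw [e1] at a1
    have b1 := (aux_tele G r hG p i 1 (by omega)).1
    have e2 : (i+1) + (t+k-(i+1)) = t+k := by omega
    have c1 := (aux_tele G r hG p (i+1) (t+k-(i+1)) (by omega)).1
    rw [e2] at c1
    omega


lemma aux_greedy (hG : G.Connected) {x y : V} {p : G.Walk x y}
    (hiso : p.length = G.dist x y) :
    ∀ m t, t + m = p.length →
    ∃ (s : Finset (Σ v : V, G.Walk r v)) (A : Finset ℕ),
      (∀ q ∈ s, IsIsometricPath G q.2) ∧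
      (∀ i, t ≤ i → i ≤ p.length → ∃ q ∈ s, p.getVert i ∈ q.2.support) ∧
      (∀ i ∈ A, t ≤ i ∧ i ≤ p.length) ∧
      s.card ≤ A.card ∧
      (∀ i ∈ A, ∀ j ∈ A, i < j →
        ¬ dagReach G r (p.getVert i) (p.getVert j) ∧
        ¬ dagReach G r (p.getVert j) (p.getVert i)) := by
  intro m
  induction m using Nat.strong_induction_on with
  | _ m ih =>
    intro t ht
    classical
    set e := Nat.findGreatest (Mono G r p t) m with he
    have hmono : Mono G r p t e :=
      Nat.findGreatest_spec (Nat.zero_le m) (Or.inl (fun i h1 h2 => by omega))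
    have he_le : e ≤ m := Nat.findGreatest_le m
    obtain ⟨Q, hQiso, hQcov⟩ := aux_run_cover G r hG p (by omega) hmono
    rcases Nat.lt_or_ge e m with hlt | hge
    · -- recurse
      obtain ⟨s', A', hiso', hcov', hbnd', hcard', hanti'⟩ :=
        ih (m - (e+1)) (by omega) (t+e+1) (by omega)
      refine ⟨insert Q s', insert t A', ?_, ?_, ?_, ?_, ?_⟩
      · intro q hq
        rcases Finset.mem_insert.mp hq with h | h
        · exact h ▸ hQiso
        · exact hiso' q h
      · intro i h1 h2
        rcases le_or_gt i (t+e) with h3 | h3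
        · exact ⟨Q, Finset.mem_insert_self _ _, hQcov i h1 h3⟩
        · obtain ⟨q, hq1, hq2⟩ := hcov' i (by omega) h2
          exact ⟨q, Finset.mem_insert_of_mem hq1, hq2⟩
      · intro i hi
        rcases Finset.mem_insert.mp hi with h | h
        · omega
        · have := hbnd' i h; omega
      · have htA : t ∉ A' := fun hmem => by have := hbnd' t hmem; omega
        calc (insert Q s').card ≤ s'.card + 1 := Finset.card_insert_le _ _
          _ ≤ A'.card + 1 := by omega
          _ = (insert t A').card := (Finset.card_insert_of_notMem htA).symm
      · intro i hi j hj hij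
        rcases Finset.mem_insert.mp hi with h | h
        · subst h
          rcases Finset.mem_insert.mp hj with h' | h'
          · omega
          · -- i = t, j ∈ A', j ≥ t+e+1
            have hj1 := hbnd' j h'
            have hmax : ¬ Mono G r p i (e+1) := fun hmm => by
              have := Nat.le_findGreatest (by omega : e+1 ≤ m) hmm
              omega
            have e3 : i + (j - i) = j := by omega
            constructor
            · intro hre
              rw [← e3] at hre
              exact hmax (aux_mono_restrict G r
                (aux_mono_reach G r hG hiso (by omega) (Or.inl hre)) (by omega))
            · intro hre
              rw [← e3] at hre
              exact hmax (aux_mono_restrict G r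
                (aux_mono_reach G r hG hiso (by omega) (Or.inr hre)) (by omega))
        · rcases Finset.mem_insert.mp hj with h' | h'
          · subst h'
            have := hbnd' i h
            omega
          · exact hanti' i h j h' hij
    · -- e = m : single chain covers the rest
      refine ⟨{Q}, {t}, ?_, ?_, ?_, ?_, ?_⟩
      · intro q hq
        rw [Finset.mem_singleton] at hq
        exact hq ▸ hQiso
      · intro i h1 h2
        exact ⟨Q, Finset.mem_singleton_self _, hQcov i h1 (by omega)⟩
      · intro i hi
        rw [Finset.mem_singleton] at hi
        omega
      · simp
      · intro i hi j hj hij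
        rw [Finset.mem_singleton] at hi hj
        omega


lemma aux_getVert_mem_support {x y : V} (p : G.Walk x y) {i : ℕ} (hi : i ≤ p.length) :
    p.getVert i ∈ p.support :=
  SimpleGraph.Walk.mem_support_iff_exists_getVert.mpr ⟨i, rfl, hi⟩

lemma aux_coverPath (hG : G.Connected) {x y : V} (p : G.Walk x y)
    (hp : IsIsometricPath G p) (c : ℕ)
    (hb : ∀ A : Finset V, (∀ a ∈ A, a ∈ p.support) → IsAntichainSet G r A → A.card ≤ c) :
    ∃ s : Finset (Σ v : V, G.Walk r v), s.card ≤ c ∧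
      (∀ q ∈ s, IsIsometricPath G q.2) ∧
      ∀ a ∈ p.support, ∃ q ∈ s, a ∈ q.2.support := by
  classical
  obtain ⟨s, A, h1, h2, h3, h4, h5⟩ := aux_greedy G r hG hp.2 p.length 0 (by omega)
  have hinj : Set.InjOn p.getVert A := by
    intro i hi j hj heq
    by_contra hne
    rcases lt_or_gt_of_ne hne with hlt | hlt
    · exact (h5 i hi j hj hlt).1 (by rw [heq]; exact Relation.ReflTransGen.refl)
    · exact (h5 j hj i hi hlt).1 (by rw [heq]; exact Relation.ReflTransGen.refl)
  have hcard : (A.image p.getVert).card = A.card := Finset.card_image_of_injOn hinj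
  refine ⟨s, ?_, h1, ?_⟩
  · have hle : (A.image p.getVert).card ≤ c := by
      refine hb _ ?_ ?_
      · intro a ha
        rw [Finset.mem_image] at ha
        obtain ⟨i, hi, rfl⟩ := ha
        exact aux_getVert_mem_support G p (h3 i hi).2
      · intro a ha b hbm hne
        rw [Finset.mem_image] at ha hbm
        obtain ⟨i, hi, rfl⟩ := ha
        obtain ⟨j, hj, rfl⟩ := hbm
        have hij : i ≠ j := fun hc => hne (by rw [hc])
        rcases lt_or_gt_of_ne hij with hlt | hlt
        · exact h5 i hi j hj hlt
        · exact ⟨(h5 j hj i hi hlt).2, (h5 j hj i hi hlt).1⟩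
    omega
  · intro a ha
    obtain ⟨i, rfl, hi⟩ := SimpleGraph.Walk.mem_support_iff_exists_getVert.mp ha
    exact h2 i (Nat.zero_le i) hi

end Aux


/-- If every antichain w.r.t. `r` among the vertices of any
isometric path of a connected graph `G` has size at most `c`, then `G` has an
isometric path cover consisting of `r`-rooted isometric paths whose size is at
most `c` times the isometric path number of `G` (the minimum size of an
isometric path cover). -/
theorem statement14 [Fintype V] (G : SimpleGraph V) (hG : G.Connected) (r : V) (c : ℕ)
    (h : ∀ (x y : V) (p : G.Walk x y), IsIsometricPath G p →
      ∀ A : Finset V, (∀ a ∈ A, a ∈ p.support) → IsAntichainSet G r A → A.card ≤ c) :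
    ∃ S : Finset (Σ x y : V, G.Walk x y),
      (∀ p ∈ S, IsIsometricPath G p.2.2) ∧ (∀ p ∈ S, p.1 = r) ∧
      (∀ v : V, ∃ p ∈ S, v ∈ p.2.2.support) ∧
      S.card ≤ c * sInf {n : ℕ | ∃ T : Finset (Σ x y : V, G.Walk x y),
        (∀ p ∈ T, IsIsometricPath G p.2.2) ∧ (∀ v : V, ∃ p ∈ T, v ∈ p.2.2.support) ∧
        T.card = n} := by
  classical
  -- the set of cover sizes is nonempty
  set Sset := {n : ℕ | ∃ T : Finset (Σ x y : V, G.Walk x y),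
      (∀ p ∈ T, IsIsometricPath G p.2.2) ∧ (∀ v : V, ∃ p ∈ T, v ∈ p.2.2.support) ∧
      T.card = n} with hSset
  have hne : Sset.Nonempty := by
    refine ⟨_, Finset.univ.image (fun v => (⟨v, v, SimpleGraph.Walk.nil⟩ :
      Σ x y : V, G.Walk x y)), ?_, ?_, rfl⟩
    · intro p hp
      rw [Finset.mem_image] at hp
      obtain ⟨v, -, rfl⟩ := hp
      exact ⟨SimpleGraph.Walk.IsPath.nil, by simp [SimpleGraph.dist_self]⟩
    · intro v
      exact ⟨⟨v, v, SimpleGraph.Walk.nil⟩, Finset.mem_image_of_mem _ (Finset.mem_univ v), by simp⟩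
  obtain ⟨T, hTiso, hTcov, hTcard⟩ := Nat.sInf_mem hne
  have hchoice : ∀ σ : (Σ x y : V, G.Walk x y), ∃ s : Finset (Σ v : V, G.Walk r v),
      σ ∈ T → s.card ≤ c ∧ (∀ q ∈ s, IsIsometricPath G q.2) ∧
        ∀ a ∈ σ.2.2.support, ∃ q ∈ s, a ∈ q.2.support := by
    intro σ
    by_cases hσ : σ ∈ T
    · obtain ⟨s, hs1, hs2, hs3⟩ := aux_coverPath G r hG σ.2.2 (hTiso σ hσ) c
        (fun A hA hA2 => h _ _ σ.2.2 (hTiso σ hσ) A hA hA2)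
      exact ⟨s, fun _ => ⟨hs1, hs2, hs3⟩⟩
    · exact ⟨∅, fun hc => absurd hc hσ⟩
  choose F hF using hchoice
  refine ⟨T.biUnion (fun σ => (F σ).image
    (fun q => (⟨r, q.1, q.2⟩ : Σ x y : V, G.Walk x y))), ?_, ?_, ?_, ?_⟩
  · intro p hp
    rw [Finset.mem_biUnion] at hp
    obtain ⟨σ, hσ, hp⟩ := hp
    rw [Finset.mem_image] at hp
    obtain ⟨q, hq, rfl⟩ := hp
    exact (hF σ hσ).2.1 q hq
  · intro p hp
    rw [Finset.mem_biUnion] at hp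
    obtain ⟨σ, hσ, hp⟩ := hp
    rw [Finset.mem_image] at hp
    obtain ⟨q, hq, rfl⟩ := hp
    rfl
  · intro v
    obtain ⟨σ, hσ, hv⟩ := hTcov v
    obtain ⟨q, hq, hqv⟩ := (hF σ hσ).2.2 v hv
    exact ⟨⟨r, q.1, q.2⟩, Finset.mem_biUnion.mpr ⟨σ, hσ,
      Finset.mem_image_of_mem _ hq⟩, hqv⟩
  · calc (T.biUnion _).card ≤ ∑ σ ∈ T, ((F σ).image
        (fun q => (⟨r, q.1, q.2⟩ : Σ x y : V, G.Walk x y))).card :=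
          Finset.card_biUnion_le
      _ ≤ ∑ σ ∈ T, c := Finset.sum_le_sum (fun σ hσ =>
          le_trans (Finset.card_image_le) ((hF σ hσ).1))
      _ = T.card * c := by rw [Finset.sum_const, smul_eq_mul]
      _ = c * sInf Sset := by rw [hTcard, Nat.mul_comm]
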